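/- Let X be a compact metric space with a Borel probability measure m and f : X → X continuous. Let ν₁ and ν₂ be mutually singular f-invariant Borel probability measures on X. If the set A of points x ∈ X whose Birkhoff limit μ_x exists satisfies m(A) > 0, then the sequence m_n = (1/n)∑_{k=0}^{n−1} f_*^k m does not accumulate, in the weak* topology, on both ν₁ and ν₂. -/

import Mathlib

open MeasureTheory Filter Topology ENNReal

noncomputable section

variable {X : Type*} [MetricSpace X] [CompactSpace X] [MeasurableSpace X] [BorelSpace X]

/-- The `n`-th Birkhoff average of the observable `φ` along the orbit of `x` under `f`. -/
def birkhoffAvg (f : X → X) (φ : X → ℝ) (x : X) (n : ℕ) : ℝ :=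
  (n : ℝ)⁻¹ * ∑ j ∈ Finset.range n, φ (f^[j] x)

/-- `μ` is the Birkhoff limit of the point `x` under `f`: the probability measures
`(1/n) ∑_{j<n} δ_{f^j x}` converge to `μ` in the weak* topology, i.e. the Birkhoff averages of
every continuous observable converge to the corresponding integral. -/
def IsBirkhoffLimit (f : X → X) (x : X) (μ : Measure X) : Prop :=
  IsProbabilityMeasure μ ∧
    ∀ φ : C(X, ℝ), Tendsto (birkhoffAvg f φ x) atTop (𝓝 (∫ y, φ y ∂μ))

/-- The basin of a measure `μ`: the set of points whose Birkhoff limit exists and equals `μ`. -/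
def basin (f : X → X) (μ : Measure X) : Set X := {x | IsBirkhoffLimit f x μ}

/-- The averaged push-forwards `(1/n) ∑_{k<n} f_*^k m` of the measure `m` under `f`. -/
def pushAvg (f : X → X) (m : Measure X) (n : ℕ) : Measure X :=
  (n : ℝ≥0∞)⁻¹ • ∑ k ∈ Finset.range n, Measure.map f^[k] m

set_option linter.unusedSectionVars false in
lemma pushAvg_isProbabilityMeasure {f : X → X} (hf : Measurable f) (m : Measure X)
    (hm : IsProbabilityMeasure m) {n : ℕ} (hn : n ≠ 0) :
    IsProbabilityMeasure (pushAvg f m n) := by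
  constructor
  have h1 : ∀ k, Measure.map f^[k] m Set.univ = 1 := fun k => by
    haveI := hm
    rw [Measure.map_apply (hf.iterate k) MeasurableSet.univ, Set.preimage_univ, measure_univ]
  simp only [pushAvg, Measure.smul_apply, Measure.coe_finset_sum, Finset.sum_apply, h1,
    Finset.sum_const, Finset.card_range, nsmul_eq_mul, mul_one, smul_eq_mul]
  have hn' : (n : ℝ≥0∞) ≠ 0 := by exact_mod_cast hn
  exact ENNReal.inv_mul_cancel hn' (ENNReal.natCast_ne_top n)

/-- The sequence `m_n = (1/n) ∑_{k<n} f_*^k m`, `n ≥ 1`, of averaged push-forwards of a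
probability measure `m`, as a sequence of probability measures. -/
def pushProbAvg (f : X → X) (hf : Measurable f) (m : Measure X)
    (hm : IsProbabilityMeasure m) (n : ℕ) : ProbabilityMeasure X :=
  ⟨pushAvg f m (n + 1), pushAvg_isProbabilityMeasure hf m hm n.succ_ne_zero⟩


set_option linter.unusedSectionVars false

lemma myInt {g : X → ℝ} (hg : Continuous g) (μ : Measure X) [IsFiniteMeasure μ] :
    Integrable g μ :=
  (BoundedContinuousFunction.mkOfCompact ⟨g, hg⟩).integrable μ

lemma birkhoffAvg_continuous {f : X → X} (hf : Continuous f) (φ : C(X, ℝ)) (n : ℕ) :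
    Continuous fun x => birkhoffAvg f φ x n :=
  continuous_const.mul (continuous_finset_sum _ fun j _ => φ.continuous.comp (hf.iterate j))

lemma birkhoffAvg_mem_Icc {f : X → X} {φ : X → ℝ} (hφ : ∀ x, φ x ∈ Set.Icc (0:ℝ) 1)
    (x : X) (n : ℕ) : birkhoffAvg f φ x n ∈ Set.Icc (0:ℝ) 1 := by
  constructor
  · exact mul_nonneg (by positivity) (Finset.sum_nonneg fun j _ => (hφ _).1)
  · rcases Nat.eq_zero_or_pos n with h | h
    · simp [birkhoffAvg, h]
    · have hs : ∑ j ∈ Finset.range n, φ (f^[j] x) ≤ n := by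
        calc ∑ j ∈ Finset.range n, φ (f^[j] x) ≤ ∑ j ∈ Finset.range n, (1:ℝ) :=
              Finset.sum_le_sum fun j _ => (hφ _).2
          _ = n := by simp
      have hn : (0:ℝ) < n := by exact_mod_cast h
      rw [birkhoffAvg, inv_mul_le_iff₀ hn, mul_one]
      exact hs

lemma integral_pushAvg {f : X → X} (hf : Continuous f) (m : Measure X)
    [IsProbabilityMeasure m] (φ : C(X, ℝ)) {n : ℕ} (hn : n ≠ 0) :
    ∫ y, φ y ∂(pushAvg f m n) = ∫ x, birkhoffAvg f φ x n ∂m := by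
  have hint : ∀ k : ℕ, Integrable (fun y => φ y) (Measure.map f^[k] m) := by
    intro k
    haveI : IsProbabilityMeasure (Measure.map f^[k] m) :=
      Measure.isProbabilityMeasure_map (hf.measurable.iterate k).aemeasurable
    exact myInt φ.continuous _
  rw [pushAvg, integral_smul_measure, integral_finset_sum_measure (fun k _ => hint k)]
  have hmap : ∀ k : ℕ, ∫ y, φ y ∂(Measure.map f^[k] m) = ∫ x, φ (f^[k] x) ∂m := fun k =>
    integral_map (hf.measurable.iterate k).aemeasurable φ.continuous.aestronglyMeasurable
  simp_rw [hmap]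
  have hsum := integral_finset_sum (μ := m) (Finset.range n) (f := fun j x => φ (f^[j] x))
    (fun k _ => myInt (φ.continuous.comp (hf.iterate k)) m)
  have hrhs : ∫ x, birkhoffAvg f φ x n ∂m
      = (n:ℝ)⁻¹ * ∑ k ∈ Finset.range n, ∫ x, φ (f^[k] x) ∂m := by
    simp only [birkhoffAvg]
    rw [MeasureTheory.integral_const_mul]
    rw [hsum]
  rw [hrhs]
  simp [smul_eq_mul]

lemma lintegral_liminf_le_ofReal_of_mapClusterPt
    {f : X → X} (hf : Continuous f) (m : Measure X) (hm : IsProbabilityMeasure m)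
    (ν : ProbabilityMeasure X)
    (hcl : MapClusterPt ν atTop (pushProbAvg f hf.measurable m hm))
    (φ : C(X, ℝ)) (hφ : ∀ x, φ x ∈ Set.Icc (0:ℝ) 1) :
    ∫⁻ x, liminf (fun n => ENNReal.ofReal (birkhoffAvg f φ x n)) atTop ∂m
      ≤ ENNReal.ofReal (∫ y, φ y ∂(ν : Measure X)) := by
  haveI := hm
  have hcont : Continuous fun μ : ProbabilityMeasure X =>
      ∫ y, (BoundedContinuousFunction.mkOfCompact φ) y ∂(μ : Measure X) :=
    ProbabilityMeasure.continuous_integral_boundedContinuousFunction _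
  have hclφ : MapClusterPt (∫ y, φ y ∂(ν : Measure X)) atTop
      (fun n => ∫ y, φ y ∂(pushAvg f m (n + 1))) :=
    hcl.continuousAt_comp hcont.continuousAt
  have hcn : ∀ n : ℕ, ∫ y, φ y ∂(pushAvg f m (n + 1)) = ∫ x, birkhoffAvg f φ x (n+1) ∂m :=
    fun n => integral_pushAvg hf m φ n.succ_ne_zero
  have hle1 : ∀ n : ℕ, n ≠ 0 → ∫ x, birkhoffAvg f φ x n ∂m ≤ 1 := by
    intro n hn
    calc ∫ x, birkhoffAvg f φ x n ∂m ≤ ∫ _, (1:ℝ) ∂m :=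
          integral_mono (myInt (birkhoffAvg_continuous hf φ n) m)
            (integrable_const 1) (fun x => (birkhoffAvg_mem_Icc hφ x n).2)
      _ = 1 := by simp
  have hmeas : ∀ n : ℕ, Measurable fun x => ENNReal.ofReal (birkhoffAvg f φ x n) := fun n =>
    ENNReal.measurable_ofReal.comp (birkhoffAvg_continuous hf φ n).measurable
  refine le_trans (lintegral_liminf_le (μ := m) hmeas) ?_
  have hof : ∀ n : ℕ, ∫⁻ x, ENNReal.ofReal (birkhoffAvg f φ x (n+1)) ∂m
      = ENNReal.ofReal (∫ x, birkhoffAvg f φ x (n+1) ∂m) := fun n =>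
    (ofReal_integral_eq_lintegral_ofReal (myInt (birkhoffAvg_continuous hf φ (n+1)) m)
      (Eventually.of_forall fun x => (birkhoffAvg_mem_Icc hφ x (n+1)).1)).symm
  have hshift : liminf (fun n => ∫⁻ x, ENNReal.ofReal (birkhoffAvg f φ x n) ∂m) atTop
      = liminf (fun n => ENNReal.ofReal (∫ x, birkhoffAvg f φ x (n+1) ∂m)) atTop := by
    rw [← liminf_nat_add (fun n => ∫⁻ x, ENNReal.ofReal (birkhoffAvg f φ x n) ∂m) 1]
    exact liminf_congr (Eventually.of_forall hof)
  rw [hshift]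
  by_contra hlt
  push_neg at hlt
  obtain ⟨b, hb1, hb2⟩ := exists_between hlt
  have hev : ∀ᶠ n in atTop, b < ENNReal.ofReal (∫ x, birkhoffAvg f φ x (n+1) ∂m) :=
    eventually_lt_of_lt_liminf hb2
  have hlim_le : liminf (fun n => ENNReal.ofReal (∫ x, birkhoffAvg f φ x (n+1) ∂m)) atTop
      ≤ (1 : ℝ≥0∞) := by
    refine liminf_le_of_le (by isBoundedDefault) ?_
    intro a ha
    obtain ⟨n, hn⟩ := ha.exists
    exact le_trans hn (by simpa using hle1 (n+1) n.succ_ne_zero)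
  have hb_ne : b ≠ ⊤ := ne_top_of_lt (lt_of_lt_of_le hb2 hlim_le)
  have hνnn : 0 ≤ ∫ y, φ y ∂(ν : Measure X) := integral_nonneg fun y => (hφ y).1
  have hνb : ∫ y, φ y ∂(ν : Measure X) < b.toReal :=
    (ENNReal.ofReal_lt_iff_lt_toReal hνnn hb_ne).1 hb1
  set ε : ℝ := b.toReal - ∫ y, φ y ∂(ν : Measure X) with hε
  have hεpos : 0 < ε := by simp [hε]; linarith
  have hfreq : ∃ᶠ n in atTop,
      (fun n => ∫ y, φ y ∂(pushAvg f m (n + 1))) n ∈ Metric.ball (∫ y, φ y ∂(ν : Measure X)) ε :=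
    mapClusterPt_iff_frequently.mp hclφ _ (Metric.ball_mem_nhds _ hεpos)
  obtain ⟨n, hn1, hn2⟩ := (hfreq.and_eventually hev).exists
  rw [Metric.mem_ball, Real.dist_eq, abs_lt] at hn1
  have h3 : b.toReal < ∫ x, birkhoffAvg f φ x (n+1) ∂m :=
    ENNReal.toReal_lt_of_lt_ofReal hn2
  have hn1' := hn1.2
  simp only [hcn n] at hn1'
  linarith


/-- If `ν₁` and `ν₂` are mutually singular invariant Borel probability measures of a continuous
map `f` of a compact metric space, and the set of points with a well-defined Birkhoff limit has
positive `m`-measure, then the averaged push-forwards `m_n = (1/n) ∑_{k<n} f_*^k m` cannot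
accumulate (weakly*) on both `ν₁` and `ν₂`. -/
theorem not_clusterPt_both_of_mutuallySingular
    {f : X → X} (hf : Continuous f) (m : Measure X) (hm : IsProbabilityMeasure m)
    (ν₁ ν₂ : ProbabilityMeasure X)
    (hsing : (ν₁ : Measure X).MutuallySingular (ν₂ : Measure X))
    (hinv₁ : Measure.map f (ν₁ : Measure X) = ν₁)
    (hinv₂ : Measure.map f (ν₂ : Measure X) = ν₂)
    (hA : 0 < m {x | ∃ μ : Measure X, IsBirkhoffLimit f x μ}) :
    ¬ (MapClusterPt ν₁ atTop (pushProbAvg f hf.measurable m hm) ∧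
        MapClusterPt ν₂ atTop (pushProbAvg f hf.measurable m hm)) := by
  haveI := hm
  rintro ⟨h1, h2⟩
  obtain ⟨S, hSm, hS1, hS2⟩ := hsing
  set A := {x | ∃ μ : Measure X, IsBirkhoffLimit f x μ} with hAdef
  set c := m A with hcdef
  have hc_ne_top : c ≠ ⊤ := by
    refine ne_top_of_le_ne_top ?_ (measure_mono (Set.subset_univ A))
    simp [measure_univ]
  have hc4pos : 0 < c / 4 := ENNReal.div_pos_iff.2 ⟨hA.ne', by norm_num⟩
  -- open set U ⊇ S with ν₁ U < c/4
  obtain ⟨U, hSU, hUo, hU⟩ := Set.exists_isOpen_lt_of_lt (μ := (ν₁ : Measure X)) S (c/4)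
    (by rw [hS1]; exact hc4pos)
  -- compact K ⊆ S with ν₂ (S \ K) < c/4
  obtain ⟨K, hKS, hKc, hK⟩ := hSm.exists_isCompact_lt_add (μ := (ν₂ : Measure X))
    (measure_ne_top _ S) (hε := hc4pos.ne')
  have hνK : (ν₂ : Measure X) Kᶜ < c/4 := by
    have hsub : Kᶜ ⊆ Sᶜ ∪ (S \ K) := by
      intro x hx
      by_cases hxS : x ∈ S
      · exact Or.inr ⟨hxS, hx⟩
      · exact Or.inl hxS
    calc (ν₂ : Measure X) Kᶜ ≤ (ν₂ : Measure X) Sᶜ + (ν₂ : Measure X) (S \ K) :=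
          le_trans (measure_mono hsub) (measure_union_le _ _)
      _ = (ν₂ : Measure X) (S \ K) := by rw [hS2, zero_add]
      _ < c/4 := by
          rw [measure_diff hKS hKc.isClosed.measurableSet.nullMeasurableSet (measure_ne_top _ K)]
          exact ENNReal.sub_lt_of_lt_add (measure_mono hKS) ((add_comm (c/4) _) ▸ hK)
  -- Urysohn function
  obtain ⟨g, hg0, hg1, hg01⟩ := exists_continuous_zero_one_of_isCompact hKc
    hUo.isClosed_compl (Set.disjoint_compl_right_iff_subset.mpr (hKS.trans hSU))
  set φ : C(X, ℝ) := 1 - g with hφdef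
  set ψ : C(X, ℝ) := g with hψdef
  have hφ01 : ∀ x, φ x ∈ Set.Icc (0:ℝ) 1 := by
    intro x
    have := hg01 x
    simp only [hφdef, ContinuousMap.sub_apply, ContinuousMap.one_apply]
    constructor <;> [linarith [this.2]; linarith [this.1]]
  have hψ01 : ∀ x, ψ x ∈ Set.Icc (0:ℝ) 1 := fun x => hg01 x
  -- key inequalities
  have key₁ := lintegral_liminf_le_ofReal_of_mapClusterPt hf m hm ν₁ h1 φ hφ01
  have key₂ := lintegral_liminf_le_ofReal_of_mapClusterPt hf m hm ν₂ h2 ψ hψ01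
  -- the combined liminf function
  set L : C(X,ℝ) → X → ℝ≥0∞ := fun θ x =>
    liminf (fun n => ENNReal.ofReal (birkhoffAvg f θ x n)) atTop with hLdef
  have hLmeas : ∀ θ : C(X,ℝ), Measurable (L θ) := fun θ =>
    Measurable.liminf fun n =>
      ENNReal.measurable_ofReal.comp (birkhoffAvg_continuous hf θ n).measurable
  -- on A, L φ x + L ψ x = 1
  have hsum : ∀ x ∈ A, L φ x + L ψ x = 1 := by
    rintro x ⟨μ, hμprob, hμtend⟩
    haveI := hμprob
    have hφlim : L φ x = ENNReal.ofReal (∫ y, φ y ∂μ) :=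
      ((ENNReal.continuous_ofReal.tendsto _).comp (hμtend φ)).liminf_eq
    have hψlim : L ψ x = ENNReal.ofReal (∫ y, ψ y ∂μ) :=
      ((ENNReal.continuous_ofReal.tendsto _).comp (hμtend ψ)).liminf_eq
    rw [hφlim, hψlim, ← ENNReal.ofReal_add (integral_nonneg fun y => (hφ01 y).1)
      (integral_nonneg fun y => (hψ01 y).1),
      ← integral_add (myInt φ.continuous μ) (myInt ψ.continuous μ)]
    have : ∀ y, φ y + ψ y = 1 := by
      intro y; simp [hφdef, hψdef]
    simp_rw [this]
    simp
  -- Markov: c ≤ ∫⁻ (L φ + L ψ)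
  have hmarkov : c ≤ ∫⁻ x, (L φ x + L ψ x) ∂m := by
    have hsub : A ⊆ {x | 1 ≤ L φ x + L ψ x} := fun x hx => le_of_eq (hsum x hx).symm
    calc c ≤ m {x | 1 ≤ L φ x + L ψ x} := measure_mono hsub
      _ = 1 * m {x | 1 ≤ L φ x + L ψ x} := (one_mul _).symm
      _ ≤ ∫⁻ x, (L φ x + L ψ x) ∂m :=
          mul_meas_ge_le_lintegral₀ ((hLmeas φ).add (hLmeas ψ)).aemeasurable 1
  have hsplit : ∫⁻ x, (L φ x + L ψ x) ∂m = (∫⁻ x, L φ x ∂m) + ∫⁻ x, L ψ x ∂m :=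
    lintegral_add_left (hLmeas φ) _
  -- bound the integrals against ν₁ U and ν₂ Kᶜ
  have hb₁ : ENNReal.ofReal (∫ y, φ y ∂(ν₁ : Measure X)) ≤ (ν₁ : Measure X) U := by
    have hle : ∫ y, φ y ∂(ν₁ : Measure X) ≤ ((ν₁ : Measure X) U).toReal := by
      have hmono : ∫ y, φ y ∂(ν₁ : Measure X)
          ≤ ∫ y, Set.indicator U (fun _ => (1:ℝ)) y ∂(ν₁ : Measure X) := by
        refine integral_mono (myInt φ.continuous _)
          ((integrable_const (1:ℝ)).indicator hUo.measurableSet) (fun y => ?_)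
        by_cases hy : y ∈ U
        · simp [Set.indicator_of_mem hy, (hφ01 y).2]
        · have h1y : ψ y = 1 := by simpa using hg1 hy
          have h0 : φ y = 0 := by
            simp only [hφdef, ContinuousMap.sub_apply, ContinuousMap.one_apply, h1y]; ring
          simp [Set.indicator_of_notMem hy, h0]
      rwa [integral_indicator_const _ hUo.measurableSet, smul_eq_mul, mul_one] at hmono
    calc ENNReal.ofReal (∫ y, φ y ∂(ν₁ : Measure X))
        ≤ ENNReal.ofReal ((ν₁ : Measure X) U).toReal := ENNReal.ofReal_le_ofReal hle
      _ = (ν₁ : Measure X) U := ENNReal.ofReal_toReal (measure_ne_top _ U)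
  have hb₂ : ENNReal.ofReal (∫ y, ψ y ∂(ν₂ : Measure X)) ≤ (ν₂ : Measure X) Kᶜ := by
    have hle : ∫ y, ψ y ∂(ν₂ : Measure X) ≤ ((ν₂ : Measure X) Kᶜ).toReal := by
      have hmono : ∫ y, ψ y ∂(ν₂ : Measure X)
          ≤ ∫ y, Set.indicator Kᶜ (fun _ => (1:ℝ)) y ∂(ν₂ : Measure X) := by
        refine integral_mono (myInt ψ.continuous _)
          ((integrable_const (1:ℝ)).indicator hKc.isClosed.measurableSet.compl) (fun y => ?_)
        by_cases hy : y ∈ K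
        · have h0 : ψ y = 0 := by simpa using hg0 hy
          simp [Set.indicator, hy, h0]
        · simp [Set.indicator_of_mem (Set.mem_compl hy), (hψ01 y).2]
      rwa [integral_indicator_const _ hKc.isClosed.measurableSet.compl, smul_eq_mul,
        mul_one] at hmono
    calc ENNReal.ofReal (∫ y, ψ y ∂(ν₂ : Measure X))
        ≤ ENNReal.ofReal ((ν₂ : Measure X) Kᶜ).toReal := ENNReal.ofReal_le_ofReal hle
      _ = (ν₂ : Measure X) Kᶜ := ENNReal.ofReal_toReal (measure_ne_top _ Kᶜ)
  -- combine
  have hfinal : c ≤ (ν₁ : Measure X) U + (ν₂ : Measure X) Kᶜ :=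
    calc c ≤ (∫⁻ x, L φ x ∂m) + ∫⁻ x, L ψ x ∂m := hmarkov.trans hsplit.le
      _ ≤ ENNReal.ofReal (∫ y, φ y ∂(ν₁ : Measure X))
            + ENNReal.ofReal (∫ y, ψ y ∂(ν₂ : Measure X)) := add_le_add key₁ key₂
      _ ≤ (ν₁ : Measure X) U + (ν₂ : Measure X) Kᶜ := add_le_add hb₁ hb₂
  have hcontra : c < c := by
    calc c ≤ (ν₁ : Measure X) U + (ν₂ : Measure X) Kᶜ := hfinal
      _ < c/4 + c/4 := ENNReal.add_lt_add hU hνK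
      _ = c/2 := by
            rw [ENNReal.div_add_div_same, ← two_mul, show (4:ℝ≥0∞) = 2*2 by norm_num,
              ENNReal.mul_div_mul_left _ _ two_ne_zero ENNReal.ofNat_ne_top]
      _ < c := ENNReal.half_lt_self hA.ne' hc_ne_top
  exact absurd hcontra (lt_irrefl c)

end
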